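/- In the setting of eq. (9eq) — Y a real Hilbert space, h : Y → ℝ with gradient ∇h and Hessian field H (each H(y) self-adjoint with μ‖v‖² ≤ ⟨H(y)v,v⟩ ≤ L_{g,1}‖v‖², 0 < μ ≤ L_{g,1}, ‖H(y)−H(y')‖_op ≤ L_{g,2}‖y−y'‖), ∇h(y*) = 0, 0 < γ ≤ 1/L_{g,1}, v₀ := γ∇h(y), v_{t+1} := v_t − γ(H(y)(v_t) − ∇h(y)) — suppose additionally that T satisfies (1 − μγ)^T √(1 − μγ) ≤ 1/4, and let y*' ∈ Y and s ≥ 0 satisfy ‖y* − y*'‖ ≤ (L_{g,1}/μ) s. Then, with y⁺ := y − v_T: ‖y⁺ − y*'‖ ≤ (L_{g,2}/(2μ))‖y − y*‖² + (L_{g,1}/μ) s + (1/4)‖y − y*‖. -/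

import Mathlib

open scoped RealInnerProductSpace

/-- Norm bound for a self-adjoint operator whose quadratic form lies in `[0, c]`. -/
lemma aux_opnorm_of_form {Y : Type*} [NormedAddCommGroup Y] [InnerProductSpace ℝ Y]
    (P : Y →L[ℝ] Y) (c : ℝ) (hc : 0 ≤ c)
    (hPsym : ∀ v w : Y, ⟪P v, w⟫ = ⟪v, P w⟫)
    (h0 : ∀ v : Y, 0 ≤ ⟪P v, v⟫)
    (hcb : ∀ v : Y, ⟪P v, v⟫ ≤ c * ‖v‖ ^ 2) :
    ∀ v : Y, ‖P v‖ ≤ c * ‖v‖ := by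
  have CS : ∀ a b : Y, ⟪P a, b⟫ ^ 2 ≤ ⟪P a, a⟫ * ⟪P b, b⟫ := by
    intro a b
    have key : discrim ⟪P b, b⟫ (2 * ⟪P a, b⟫) ⟪P a, a⟫ ≤ 0 := by
      apply discrim_le_zero
      intro t
      have expand : ⟪P (a + t • b), a + t • b⟫ =
          ⟪P b, b⟫ * (t * t) + 2 * ⟪P a, b⟫ * t + ⟪P a, a⟫ := by
        have hba : ⟪P b, a⟫ = ⟪P a, b⟫ := by
          rw [hPsym b a, real_inner_comm]
        simp only [map_add, map_smul, inner_add_left, inner_add_right,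
          real_inner_smul_left, real_inner_smul_right, hba]
        ring
      rw [← expand]
      exact h0 _
    rw [discrim] at key
    nlinarith [key]
  intro v
  have h1 : ⟪P v, P v⟫ = ‖P v‖ ^ 2 := real_inner_self_eq_norm_sq _
  have h2 := CS v (P v)
  have h3 := hcb v
  have h4 := hcb (P v)
  have h5 := h0 v
  have h6 := h0 (P v)
  by_contra hcon
  push_neg at hcon
  have hv0 : 0 ≤ c * ‖v‖ := mul_nonneg hc (norm_nonneg v)
  have hPv : 0 < ‖P v‖ := lt_of_le_of_lt hv0 hcon
  have hA : ⟪P v, v⟫ * ⟪P (P v), P v⟫ ≤ (c * ‖v‖ ^ 2) * (c * ‖P v‖ ^ 2) :=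
    mul_le_mul h3 h4 h6 (le_trans h5 h3)
  have hsq : c * ‖v‖ * (c * ‖v‖) < ‖P v‖ * ‖P v‖ := mul_self_lt_mul_self hv0 hcon
  nlinarith [hA, hsq, h2, h1, mul_pos hPv hPv]

/-- Taylor bound: a gradient with an `Lg2`-Lipschitz Hessian. -/
lemma aux_taylor {Y : Type*} [NormedAddCommGroup Y] [InnerProductSpace ℝ Y]
    (gradh : Y → Y) (Hf : Y → Y →L[ℝ] Y) (Lg2 : ℝ)
    (hHess : ∀ y : Y, HasFDerivAt gradh (Hf y) y)
    (hLip : ∀ y y' : Y, ‖Hf y - Hf y'‖ ≤ Lg2 * ‖y - y'‖)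
    (a b : Y) :
    ‖gradh b - gradh a - Hf a (b - a)‖ ≤ Lg2 / 2 * ‖b - a‖ ^ 2 := by
  set d := b - a with hd
  set f : ℝ → Y := fun t => gradh (a + t • d) - t • (Hf a d) - gradh a with hf
  set f' : ℝ → Y := fun t => Hf (a + t • d) d - Hf a d with hf'
  have hder : ∀ t : ℝ, HasDerivAt f (f' t) t := by
    intro t
    have h1 : HasDerivAt (fun t : ℝ => a + t • d) d t := by
      simpa using ((hasDerivAt_id t).smul_const d).const_add a
    have h2 : HasDerivAt (fun t : ℝ => gradh (a + t • d)) (Hf (a + t • d) d) t :=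
      (hHess (a + t • d)).comp_hasDerivAt t h1
    have h3 : HasDerivAt (fun t : ℝ => t • (Hf a d)) (Hf a d) t := by
      simpa using (hasDerivAt_id t).smul_const (Hf a d)
    exact (h2.sub h3).sub_const (gradh a)
  have hcont : ContinuousOn f (Set.Icc (0:ℝ) 1) :=
    fun x _ => (hder x).continuousAt.continuousWithinAt
  have hderiv : ∀ x ∈ Set.Ico (0:ℝ) 1, HasDerivWithinAt f (f' x) (Set.Ici x) x :=
    fun x _ => (hder x).hasDerivWithinAt
  have hBder : ∀ x : ℝ, HasDerivAt (fun t : ℝ => Lg2 / 2 * ‖d‖ ^ 2 * t ^ 2)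
      (Lg2 * ‖d‖ ^ 2 * x) x := by
    intro x
    have := (hasDerivAt_pow 2 x).const_mul (Lg2 / 2 * ‖d‖ ^ 2)
    refine this.congr_deriv ?_
    ring
  have ha0 : ‖f 0‖ ≤ Lg2 / 2 * ‖d‖ ^ 2 * (0:ℝ) ^ 2 := by simp [hf]
  have hbound : ∀ x ∈ Set.Ico (0:ℝ) 1, ‖f' x‖ ≤ Lg2 * ‖d‖ ^ 2 * x := by
    intro x hx
    have h1 : ‖f' x‖ = ‖(Hf (a + x • d) - Hf a) d‖ := by
      simp [hf', ContinuousLinearMap.sub_apply]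
    rw [h1]
    calc ‖(Hf (a + x • d) - Hf a) d‖ ≤ ‖Hf (a + x • d) - Hf a‖ * ‖d‖ :=
          (Hf (a + x • d) - Hf a).le_opNorm d
      _ ≤ (Lg2 * ‖(a + x • d) - a‖) * ‖d‖ := by
          apply mul_le_mul_of_nonneg_right (hLip _ _) (norm_nonneg d)
      _ = Lg2 * ‖d‖ ^ 2 * x := by
          have : ‖(a + x • d) - a‖ = x * ‖d‖ := by
            simp [norm_smul, abs_of_nonneg hx.1]
          rw [this]; ring
  have h1 : ‖f 1‖ ≤ Lg2 / 2 * ‖d‖ ^ 2 * (1:ℝ) ^ 2 :=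
    image_norm_le_of_norm_deriv_right_le_deriv_boundary hcont hderiv ha0 hBder hbound
      (Set.right_mem_Icc.2 zero_le_one)
  have h2 : f 1 = gradh b - gradh a - Hf a d := by
    simp only [hf, one_smul]
    rw [show a + d = b by rw [hd]; abel]
    abel
  have h3 : Lg2 / 2 * ‖d‖ ^ 2 * (1:ℝ) ^ 2 = Lg2 / 2 * ‖d‖ ^ 2 := by ring
  rw [h2, h3] at h1
  exact h1

set_option maxHeartbeats 1600000 in
/-- First inequality (eq. y-descent1-f) of Lemma C.2 of the paper: after `T + 1` inner
gradient-descent steps with `(1−μγ)^T √(1−μγ) ≤ 1/4`, the new lower-level iterate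
`y⁺ = y − v_T` satisfies a quarter-contraction toward `y*` plus a quadratic Newton
remainder and a step-length term. -/
theorem stmt_9
    {Y : Type*} [NormedAddCommGroup Y] [InnerProductSpace ℝ Y] [CompleteSpace Y]
    (h : Y → ℝ) (gradh : Y → Y) (Hf : Y → Y →L[ℝ] Y)
    (μ Lg1 Lg2 γ : ℝ) (hμ : 0 < μ) (hμL : μ ≤ Lg1)
    (hgrad : ∀ y : Y, HasGradientAt h (gradh y) y)
    (hHess : ∀ y : Y, HasFDerivAt gradh (Hf y) y)
    (hsym : ∀ y v w : Y, ⟪Hf y v, w⟫ = ⟪v, Hf y w⟫)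
    (hlb : ∀ y v : Y, μ * ‖v‖ ^ 2 ≤ ⟪Hf y v, v⟫)
    (hub : ∀ y v : Y, ⟪Hf y v, v⟫ ≤ Lg1 * ‖v‖ ^ 2)
    (hLip : ∀ y y' : Y, ‖Hf y - Hf y'‖ ≤ Lg2 * ‖y - y'‖)
    (ystar : Y) (hstar : gradh ystar = 0)
    (y : Y) (hγ : 0 < γ) (hγle : γ ≤ 1 / Lg1)
    (v : ℕ → Y)
    (hv0 : v 0 = γ • gradh y)
    (hvrec : ∀ t : ℕ, v (t + 1) = v t - γ • (Hf y (v t) - gradh y))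
    (T : ℕ) (hT : (1 - μ * γ) ^ T * Real.sqrt (1 - μ * γ) ≤ 1 / 4)
    (ystar' : Y) (s : ℝ) (hs : 0 ≤ s)
    (hclose : ‖ystar - ystar'‖ ≤ Lg1 / μ * s) :
    ‖(y - v T) - ystar'‖
      ≤ Lg2 / (2 * μ) * ‖y - ystar‖ ^ 2 + Lg1 / μ * s + 1 / 4 * ‖y - ystar‖ := by
  have hL1 : 0 < Lg1 := lt_of_lt_of_le hμ hμL
  have hγL : γ * Lg1 ≤ 1 := (le_div_iff₀ hL1).mp hγle
  have hμγpos : 0 < μ * γ := mul_pos hμ hγ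
  have hμγ1 : μ * γ ≤ 1 := by nlinarith [mul_nonneg (sub_nonneg.mpr hμL) hγ.le]
  set r : ℝ := 1 - μ * γ with hrdef
  have hr0 : 0 ≤ r := by rw [hrdef]; linarith
  have hr1 : r < 1 := by rw [hrdef]; linarith
  set H : Y →L[ℝ] Y := Hf y with hHdef
  set g : Y := gradh y with hgdef
  set P : Y →L[ℝ] Y := ContinuousLinearMap.id ℝ Y - γ • H with hPdef
  have hPapp : ∀ z : Y, P z = z - γ • H z := by
    intro z
    simp [hPdef, ContinuousLinearMap.sub_apply, ContinuousLinearMap.smul_apply]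
  have hHsym : ∀ a b : Y, ⟪H a, b⟫ = ⟪a, H b⟫ := by
    intro a b; rw [hHdef]; exact hsym y a b
  have hHlb : ∀ z : Y, μ * ‖z‖ ^ 2 ≤ ⟪H z, z⟫ := by
    intro z; rw [hHdef]; exact hlb y z
  have hHub : ∀ z : Y, ⟪H z, z⟫ ≤ Lg1 * ‖z‖ ^ 2 := by
    intro z; rw [hHdef]; exact hub y z
  have hPsym : ∀ a b : Y, ⟪P a, b⟫ = ⟪a, P b⟫ := by
    intro a b
    rw [hPapp, hPapp, inner_sub_left, inner_sub_right,
      real_inner_smul_left, real_inner_smul_right, hHsym a b]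
  have hnormsq : ∀ z : Y, ⟪z, z⟫ = ‖z‖ ^ 2 := fun z => real_inner_self_eq_norm_sq z
  have hP0 : ∀ z : Y, 0 ≤ ⟪P z, z⟫ := by
    intro z
    rw [hPapp, inner_sub_left, real_inner_smul_left, hnormsq]
    have h1 := hHub z
    nlinarith [sq_nonneg ‖z‖]
  have hPub : ∀ z : Y, ⟪P z, z⟫ ≤ r * ‖z‖ ^ 2 := by
    intro z
    rw [hPapp, inner_sub_left, real_inner_smul_left, hnormsq, hrdef]
    have h1 := hHlb z
    nlinarith
  have hPnorm : ∀ z : Y, ‖P z‖ ≤ r * ‖z‖ := aux_opnorm_of_form P r hr0 hPsym hP0 hPub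
  have hPpowapp : ∀ (n : ℕ) (z : Y), (P ^ (n + 1)) z = (P ^ n) (P z) := by
    intro n z; rw [pow_succ]; rfl
  have hPpowapp' : ∀ (n : ℕ) (z : Y), (P ^ (n + 1)) z = P ((P ^ n) z) := by
    intro n z; rw [pow_succ']; rfl
  have hPpownorm : ∀ (n : ℕ) (z : Y), ‖(P ^ n) z‖ ≤ r ^ n * ‖z‖ := by
    intro n
    induction n with
    | zero => intro z; simp
    | succ n ih =>
      intro z
      rw [hPpowapp]
      calc ‖(P ^ n) (P z)‖ ≤ r ^ n * ‖P z‖ := ih (P z)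
        _ ≤ r ^ n * (r * ‖z‖) :=
            mul_le_mul_of_nonneg_left (hPnorm z) (pow_nonneg hr0 n)
        _ = r ^ (n + 1) * ‖z‖ := by ring
  have hPpowsym : ∀ (n : ℕ) (a b : Y), ⟪(P ^ n) a, b⟫ = ⟪a, (P ^ n) b⟫ := by
    intro n
    induction n with
    | zero => intro a b; simp
    | succ n ih =>
      intro a b
      rw [hPpowapp, hPpowapp' n b, ih (P a) b, ← hPsym a ((P ^ n) b)]
  have hPpow0 : ∀ (n : ℕ) (z : Y), 0 ≤ ⟪(P ^ n) z, z⟫ := by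
    intro n z
    rcases Nat.even_or_odd n with ⟨m, hm⟩ | ⟨m, hm⟩
    · subst hm
      have e1 : (P ^ (m + m)) z = (P ^ m) ((P ^ m) z) := by rw [pow_add]; rfl
      rw [e1, hPpowsym m]
      exact real_inner_self_nonneg
    · subst hm
      have e1 : (P ^ (2 * m + 1)) z = (P ^ m) (P ((P ^ m) z)) := by
        rw [show 2 * m + 1 = m + (m + 1) by ring, pow_add, pow_succ']
        rfl
      rw [e1, hPpowsym m]
      exact hP0 _
  set Q : Y →L[ℝ] Y := ContinuousLinearMap.id ℝ Y - P ^ (T + 1) with hQdef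
  have hQapp : ∀ z : Y, Q z = z - (P ^ (T + 1)) z := by
    intro z; simp [hQdef, ContinuousLinearMap.sub_apply]
  have hQsym : ∀ a b : Y, ⟪Q a, b⟫ = ⟪a, Q b⟫ := by
    intro a b
    rw [hQapp, hQapp, inner_sub_left, inner_sub_right, hPpowsym]
  have hrpow1 : r ^ (T + 1) ≤ 1 := pow_le_one₀ hr0 (le_of_lt hr1)
  have hQ0 : ∀ z : Y, 0 ≤ ⟪Q z, z⟫ := by
    intro z
    rw [hQapp, inner_sub_left, hnormsq]
    have h1 : ⟪(P ^ (T + 1)) z, z⟫ ≤ ‖(P ^ (T + 1)) z‖ * ‖z‖ := real_inner_le_norm _ _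
    have h2 := hPpownorm (T + 1) z
    nlinarith [norm_nonneg z]
  have hQub : ∀ z : Y, ⟪Q z, z⟫ ≤ 1 * ‖z‖ ^ 2 := by
    intro z
    rw [hQapp, inner_sub_left, hnormsq]
    have := hPpow0 (T + 1) z
    linarith
  have hQnorm : ∀ z : Y, ‖Q z‖ ≤ 1 * ‖z‖ :=
    aux_opnorm_of_form Q 1 zero_le_one hQsym hQ0 hQub
  -- fixed point u with H u = g
  set F : Y → Y := fun z => z - γ • (H z - g) with hFdef
  have hFsub : ∀ z z' : Y, F z - F z' = P (z - z') := by
    intro z z'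
    rw [hPapp, map_sub]
    simp only [hFdef, smul_sub]
    abel
  haveI hNE : Nonempty Y := ⟨0⟩
  set K : NNReal := ⟨r, hr0⟩ with hKdef
  have hFcontr : ContractingWith K F := by
    constructor
    · exact_mod_cast hr1
    · apply LipschitzWith.of_dist_le_mul
      intro z z'
      rw [dist_eq_norm, dist_eq_norm, hFsub z z']
      exact hPnorm (z - z')
  obtain ⟨u, hufix⟩ : ∃ u : Y, F u = u :=
    ⟨ContractingWith.fixedPoint F hFcontr, hFcontr.fixedPoint_isFixedPt⟩
  have hHu : H u = g := by
    have h1 : γ • (H u - g) = 0 := by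
      have h2 : u - γ • (H u - g) = u := hufix
      exact sub_eq_self.mp h2
    rcases smul_eq_zero.mp h1 with h' | h'
    · exact absurd h' (ne_of_gt hγ)
    · exact sub_eq_zero.mp h'
  have hPu : P u = u - γ • g := by rw [hPapp, hHu]
  have hclosed : ∀ t : ℕ, v t = u - (P ^ (t + 1)) u := by
    intro t
    induction t with
    | zero =>
      rw [hv0, pow_one, hPu]
      abel
    | succ t ih =>
      rw [hvrec t, ih]
      have e2 : ∀ w : Y, w - γ • (H w - g) = P w + γ • g := by
        intro w; rw [hPapp, smul_sub]; abel
      rw [e2, map_sub, hPu, ← hPpowapp' (t + 1) u]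
      abel
  -- Taylor estimate
  have hTay : ‖H (y - ystar) - g‖ ≤ Lg2 / 2 * ‖y - ystar‖ ^ 2 := by
    have h1 := aux_taylor gradh Hf Lg2 hHess hLip y ystar
    rw [hstar, ← hHdef, ← hgdef, norm_sub_rev ystar y] at h1
    have e1 : (0 : Y) - g - H (ystar - y) = H (y - ystar) - g := by
      rw [map_sub, map_sub]; abel
    rwa [e1] at h1
  set e : Y := (y - ystar) - u with hedef
  have hHe : H e = H (y - ystar) - g := by
    rw [hedef, map_sub, hHu]
  have hesign : 0 ≤ Lg2 / 2 * ‖y - ystar‖ ^ 2 :=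
    le_trans (norm_nonneg (H (y - ystar) - g)) hTay
  have hebound : ‖e‖ ≤ Lg2 / (2 * μ) * ‖y - ystar‖ ^ 2 := by
    have h1 := hHlb e
    have h2 : ⟪H e, e⟫ ≤ ‖H e‖ * ‖e‖ := real_inner_le_norm _ _
    have h3 : ‖H e‖ ≤ Lg2 / 2 * ‖y - ystar‖ ^ 2 := by rw [hHe]; exact hTay
    have key : Lg2 / (2 * μ) * ‖y - ystar‖ ^ 2 = (Lg2 / 2 * ‖y - ystar‖ ^ 2) / μ := by
      field_simp
    rcases eq_or_lt_of_le (norm_nonneg e) with h4 | h4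
    · rw [← h4, key]
      exact div_nonneg hesign hμ.le
    · have h6 : μ * ‖e‖ ^ 2 ≤ (Lg2 / 2 * ‖y - ystar‖ ^ 2) * ‖e‖ :=
        h1.trans (h2.trans (mul_le_mul_of_nonneg_right h3 (norm_nonneg e)))
      have h7 : (μ * ‖e‖) * ‖e‖ ≤ (Lg2 / 2 * ‖y - ystar‖ ^ 2) * ‖e‖ := by
        calc (μ * ‖e‖) * ‖e‖ = μ * ‖e‖ ^ 2 := by ring
          _ ≤ _ := h6
      have h5 : μ * ‖e‖ ≤ Lg2 / 2 * ‖y - ystar‖ ^ 2 := le_of_mul_le_mul_right h7 h4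
      rw [key]
      exact (le_div_iff₀' hμ).mpr h5
  -- decomposition
  have hdec : (y - v T) - ystar' = Q e + (P ^ (T + 1)) (y - ystar) + (ystar - ystar') := by
    rw [hclosed T, hQapp, hedef, map_sub]
    abel
  have hb1 : ‖Q e‖ ≤ Lg2 / (2 * μ) * ‖y - ystar‖ ^ 2 := by
    calc ‖Q e‖ ≤ 1 * ‖e‖ := hQnorm e
      _ = ‖e‖ := one_mul _
      _ ≤ _ := hebound
  have hrsqrt : r ≤ Real.sqrt r := by
    have h1 : r ^ 2 ≤ r := by nlinarith
    calc r = Real.sqrt (r ^ 2) := (Real.sqrt_sq hr0).symm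
      _ ≤ Real.sqrt r := Real.sqrt_le_sqrt h1
  have hpow14 : r ^ (T + 1) ≤ 1 / 4 := by
    calc r ^ (T + 1) = r ^ T * r := pow_succ r T
      _ ≤ r ^ T * Real.sqrt r :=
          mul_le_mul_of_nonneg_left hrsqrt (pow_nonneg hr0 T)
      _ ≤ 1 / 4 := hT
  have hb2 : ‖(P ^ (T + 1)) (y - ystar)‖ ≤ 1 / 4 * ‖y - ystar‖ :=
    (hPpownorm (T + 1) _).trans (mul_le_mul_of_nonneg_right hpow14 (norm_nonneg _))
  calc ‖(y - v T) - ystar'‖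
      = ‖Q e + (P ^ (T + 1)) (y - ystar) + (ystar - ystar')‖ := by rw [hdec]
    _ ≤ ‖Q e‖ + ‖(P ^ (T + 1)) (y - ystar)‖ + ‖ystar - ystar'‖ := norm_add₃_le
    _ ≤ _ := by linarith [hb1, hb2, hclose]
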